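/- Let S be down-admissible for v, and let S′ = {s, s+1, …, s′−1} be a minimal down-admissible stretch for v with s ∈ S and s′ ∉ S. Then S′ ⊆ S, the set S ∖ S′ is down-admissible for v[S′], and λ_{v,S} · (−1)^{a_s p^s} · fancest_s(v)[S]_± / fancest_{s−1}(v)[S]_± = λ_{v[S′], S ∖ S′}. -/

import Mathlib

namespace SL2Tilt

/-- The `i`-th `p`-adic digit of `v`. -/
def dig (p v i : ℕ) : ℕ := v / p ^ i % p

/-- A stretch: a nonempty finite set of consecutive integers. -/
def IsStretch (S : Finset ℕ) : Prop :=
  S.Nonempty ∧ ∀ a ∈ S, ∀ b ∈ S, ∀ c, a ≤ c → c ≤ b → c ∈ S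

/-- `S` is down-admissible for `v` (with respect to the prime `p`):
(d1) the digit of `v` at the minimum of each maximal stretch of `S` is nonzero, and
(d2) if `s ∈ S` and the `(s+1)`-st digit is `0`, then `s + 1 ∈ S`. -/
def DownAdm (p v : ℕ) (S : Finset ℕ) : Prop :=
  (∀ s ∈ S, (s = 0 ∨ s - 1 ∉ S) → dig p v s ≠ 0) ∧
  (∀ s ∈ S, dig p v (s + 1) = 0 → s + 1 ∈ S)

/-- `S` is up-admissible for `v` (with respect to the prime `p`):
(u1) the digit of `v` at the minimum of each maximal stretch of `S` is nonzero, and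
(u2) if `s ∈ S` and the `(s+1)`-st digit is `p - 1`, then `s + 1 ∈ S`. -/
def UpAdm (p v : ℕ) (S : Finset ℕ) : Prop :=
  (∀ s ∈ S, (s = 0 ∨ s - 1 ∉ S) → dig p v s ≠ 0) ∧
  (∀ s ∈ S, dig p v (s + 1) = p - 1 → s + 1 ∈ S)

/-- `v[S] = ∑ᵢ εᵢ aᵢ pⁱ` (εᵢ = -1 for i ∈ S, else 1), as an integer.
All nonzero digits of `v` have index `< v`, so the range `Finset.range v ∪ S` suffices. -/
def vdown (p v : ℕ) (S : Finset ℕ) : ℤ :=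
  ∑ i ∈ Finset.range v ∪ S,
    (if i ∈ S then (-1 : ℤ) else 1) * (dig p v i : ℤ) * (p : ℤ) ^ i

/-- `v(S) = ∑ᵢ aᵢ' pⁱ` where `aᵢ' = -aᵢ` if `i ∈ S`, `aᵢ' = aᵢ + 2` if `i ∉ S` and
`i - 1 ∈ S`, and `aᵢ' = aᵢ` otherwise; as an integer. -/
def vup (p v : ℕ) (S : Finset ℕ) : ℤ :=
  ∑ i ∈ Finset.range v ∪ S ∪ S.image (· + 1),
    (if i ∈ S then -(dig p v i : ℤ)
      else if i - 1 ∈ S then (dig p v i : ℤ) + 2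
      else (dig p v i : ℤ)) * (p : ℤ) ^ i

/-- `v[S]` as a natural number. -/
def vdownN (p v : ℕ) (S : Finset ℕ) : ℕ := (vdown p v S).toNat

/-- `v(S)` as a natural number. -/
def vupN (p v : ℕ) (S : Finset ℕ) : ℕ := (vup p v S).toNat

/-- `fancest' p v s` is `v` with the `p`-adic digits in positions `< s` set to zero.
This is the ancestor `fancest_{s-1}(v)` of the paper: the youngest ancestor of `v`
whose `(s-1)`-st digit is zero (with `fancest' p v 0 = fancest_{-1}(v) = v`). -/
def fancest' (p v s : ℕ) : ℕ := p ^ s * (v / p ^ s)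

/-- The scalar `λ_{v,S} = ∏_{s ∈ S} (-1)^(a_s p^s) · fancest_{s-1}(v)[S]± / fancest_s(v)[S]±`. -/
def lam (p v : ℕ) (S : Finset ℕ) : ℚ :=
  ∏ s ∈ S,
    (-1 : ℚ) ^ (dig p v s * p ^ s) *
      ((vdown p (fancest' p v s) S : ℚ) / (vdown p (fancest' p v (s + 1)) S : ℚ))

/-- The generation of `v` : the number of (matrilineal) ancestors of `v`, i.e. the
number of nonzero `p`-adic digits of `v` minus one. -/
def gen (p v : ℕ) : ℕ :=
  ((Finset.range v).filter (fun i => dig p v i ≠ 0)).card - 1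

/-- A minimal down-admissible stretch for `v`: a down-admissible stretch, no proper
nonempty subset of which is down-admissible for `v`. -/
def MinDownStretch (p v : ℕ) (S : Finset ℕ) : Prop :=
  DownAdm p v S ∧ IsStretch S ∧ ∀ T ⊂ S, T.Nonempty → ¬ DownAdm p v T

/-- A minimal up-admissible stretch for `v`. -/
def MinUpStretch (p v : ℕ) (S : Finset ℕ) : Prop :=
  UpAdm p v S ∧ IsStretch S ∧ ∀ T ⊂ S, T.Nonempty → ¬ UpAdm p v T

/-- `A` and `B` are distant: `d(A,B) > 1`, i.e. `|a - b| > 1` for all `a ∈ A`, `b ∈ B`. -/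
def Distant (A B : Finset ℕ) : Prop :=
  ∀ a ∈ A, ∀ b ∈ B, a + 1 < b ∨ b + 1 < a

section Helpers

set_option linter.unusedVariables false

lemma dig_lt (hp : 2 ≤ p) (v i : ℕ) : dig p v i < p := Nat.mod_lt _ (by omega)

lemma index_lt (hp : 2 ≤ p) {v i : ℕ} (h : dig p v i ≠ 0) : i < v := by
  have h1 : v / p ^ i ≠ 0 := fun h0 => h (by simp [dig, h0])
  have h2 : p ^ i ≤ v := by
    by_contra hlt
    exact h1 (Nat.div_eq_of_lt (by omega))
  have h3 : i < p ^ i := (Nat.lt_pow_self (by omega) : i < p ^ i)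
  omega

lemma dig_succ (p v i : ℕ) : dig p v (i + 1) = dig p (v / p) i := by
  simp [dig, Nat.div_div_eq_div_mul, pow_succ, mul_comm]

lemma sum_dig (hp : 2 ≤ p) : ∀ n v, v < p ^ n → ∑ i ∈ Finset.range n, dig p v i * p ^ i = v := by
  intro n
  induction n with
  | zero => intro v hv; simp at hv ⊢; omega
  | succ n ih =>
    intro v hv
    rw [Finset.sum_range_succ']
    have e1 : ∀ i, dig p v (i + 1) * p ^ (i + 1) = (dig p (v / p) i * p ^ i) * p := by
      intro i; rw [dig_succ]; ring
    rw [Finset.sum_congr rfl (fun i _ => e1 i), ← Finset.sum_mul,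
      ih (v / p) (by
        have : v < p ^ n * p := by rw [← pow_succ]; exact hv
        exact Nat.div_lt_of_lt_mul (by rw [mul_comm]; exact this))]
    have := Nat.div_add_mod v p
    simp [dig, mul_comm]
    omega

lemma vdown_eq (hp : 2 ≤ p) (w : ℕ) (S : Finset ℕ) :
    vdown p w S = (w : ℤ) - 2 * ∑ i ∈ S, (dig p w i : ℤ) * (p : ℤ) ^ i := by
  unfold vdown
  have e1 : ∀ i ∈ Finset.range w ∪ S,
      (if i ∈ S then (-1 : ℤ) else 1) * (dig p w i : ℤ) * (p : ℤ) ^ i =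
        (dig p w i : ℤ) * (p : ℤ) ^ i -
          2 * (if i ∈ S then (dig p w i : ℤ) * (p : ℤ) ^ i else 0) := by
    intro i _
    by_cases h : i ∈ S <;> simp [h] <;> ring
  rw [Finset.sum_congr rfl e1, Finset.sum_sub_distrib, ← Finset.mul_sum,
    Finset.sum_ite_mem, Finset.union_inter_cancel_right]
  congr 1
  rw [← Finset.sum_subset (Finset.subset_union_left (s₂ := S))]
  · have : ∀ i ∈ Finset.range w, (dig p w i : ℤ) * (p : ℤ) ^ i = ((dig p w i * p ^ i : ℕ) : ℤ) := by
      intro i _; push_cast; ring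
    rw [Finset.sum_congr rfl this, ← Nat.cast_sum,
      sum_dig hp w w (lt_of_lt_of_le (Nat.lt_pow_self (by omega) : w < 2 ^ w) (Nat.pow_le_pow_left hp w))]
  · intro i _ hi
    simp only [Finset.mem_range, not_lt] at hi
    have : dig p w i = 0 := by
      by_contra h
      exact absurd (index_lt hp h) (by omega)
    simp [this]

lemma dig_fancest' (hp : 2 ≤ p) (v t i : ℕ) :
    dig p (fancest' p v t) i = if i < t then 0 else dig p v i := by
  unfold fancest' dig
  split
  · next h =>
    have : p ^ t = p ^ i * (p * p ^ (t - i - 1)) := by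
      rw [← pow_succ']; rw [← pow_add]; congr 1; omega
    rw [this, mul_assoc, Nat.mul_div_cancel_left _ (by positivity : 0 < p ^ i), mul_assoc]
    exact Nat.mul_mod_right p _
  · next h =>
    have : p ^ i = p ^ t * p ^ (i - t) := by rw [← pow_add]; congr 1; omega
    rw [this, ← Nat.div_div_eq_div_mul, Nat.mul_div_cancel_left _ (by positivity : 0 < p ^ t),
      Nat.div_div_eq_div_mul, ← pow_add, show t + (i - t) = i by omega]

lemma partial_ge (hp : 2 ≤ p) (u n : ℕ) (S : Finset ℕ)
    (hSn : ∀ i ∈ S, i + 2 ≤ n)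
    (hH : ∀ i ∈ S, i + 1 ∈ S ∨ dig p u (i + 1) ≠ 0) :
    ∀ k, (if k ∈ S then (p : ℤ) ^ k else 0) ≤
      ∑ i ∈ Finset.Ico k n, (if i ∈ S then (-1 : ℤ) else 1) * (dig p u i : ℤ) * (p : ℤ) ^ i := by
  set f : ℕ → ℤ := fun i => (if i ∈ S then (-1 : ℤ) else 1) * (dig p u i : ℤ) * (p : ℤ) ^ i with hf
  have key : ∀ d k, n ≤ k + d →
      (if k ∈ S then (p : ℤ) ^ k else 0) ≤ ∑ i ∈ Finset.Ico k n, f i := by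
    intro d
    induction d with
    | zero =>
      intro k hk
      have hkS : k ∉ S := fun h => by have := hSn k h; omega
      rw [Finset.Ico_eq_empty (by omega)]
      simp [hkS]
    | succ d ih =>
      intro k hk
      by_cases hkn : n ≤ k
      · have hkS : k ∉ S := fun h => by have := hSn k h; omega
        rw [Finset.Ico_eq_empty (by omega)]
        simp [hkS]
      push_neg at hkn
      rw [Finset.sum_eq_sum_Ico_succ_bot hkn]
      have hpk : (0 : ℤ) < (p : ℤ) ^ k := by positivity
      have hdk : (dig p u k : ℤ) ≤ (p : ℤ) - 1 := by
        have := dig_lt hp u k; push_cast; omega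
      have hdk0 : (0 : ℤ) ≤ (dig p u k : ℤ) := by positivity
      have h1 := ih (k + 1) (by omega)
      have hps : ((p : ℤ)) ^ (k + 1) = p * p ^ k := by ring
      by_cases hkS : k ∈ S
      · have hk2 : k + 2 ≤ n := hSn k hkS
        have hfk : f k = -((dig p u k : ℤ) * (p : ℤ) ^ k) := by simp [hf, hkS]
        rw [if_pos hkS, hfk]
        by_cases hk1 : k + 1 ∈ S
        · rw [if_pos hk1] at h1
          nlinarith [h1, hpk, hdk]
        · have hd1 : dig p u (k + 1) ≠ 0 := (hH k hkS).resolve_left hk1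
          have hd1' : (1 : ℤ) ≤ (dig p u (k + 1) : ℤ) := by
            have : 1 ≤ dig p u (k + 1) := Nat.one_le_iff_ne_zero.mpr hd1
            exact_mod_cast this
          rw [Finset.sum_eq_sum_Ico_succ_bot (show k + 1 < n by omega)]
          have h2 := ih (k + 1 + 1) (by omega)
          have h2' : (0 : ℤ) ≤ ∑ i ∈ Finset.Ico (k + 1 + 1) n, f i := by
            refine le_trans ?_ h2; split <;> positivity
          have hfk1 : f (k + 1) = (dig p u (k + 1) : ℤ) * (p : ℤ) ^ (k + 1) := by
            simp [hf, hk1]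
          rw [hfk1]
          have hm1 : (1 : ℤ) * (p : ℤ) ^ (k + 1) ≤ (dig p u (k + 1) : ℤ) * (p : ℤ) ^ (k + 1) :=
            mul_le_mul_of_nonneg_right hd1' (by positivity)
          have hm2 : (dig p u k : ℤ) * (p : ℤ) ^ k ≤ ((p : ℤ) - 1) * (p : ℤ) ^ k :=
            mul_le_mul_of_nonneg_right hdk hpk.le
          linarith [hm1, hm2, h2', hps]
      · have h1' : (0 : ℤ) ≤ ∑ i ∈ Finset.Ico (k + 1) n, f i := by
          refine le_trans ?_ h1; split <;> positivity
        have hfk : f k = (dig p u k : ℤ) * (p : ℤ) ^ k := by simp [hf, hkS]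
        rw [if_neg hkS, hfk]
        nlinarith [h1', hpk, hdk0]
  intro k
  exact key n k (by omega)

lemma vdown_pos (hp : 2 ≤ p) (u : ℕ) (S : Finset ℕ) (t : ℕ)
    (hlow : ∀ i < t, dig p u i = 0) (hdig : dig p u t ≠ 0)
    (hH : ∀ i ∈ S, t ≤ i → (i + 1 ∈ S ∨ dig p u (i + 1) ≠ 0)) :
    0 < vdown p u S := by
  classical
  set S₁ := S.filter (fun i => t ≤ i) with hS₁
  have heq : vdown p u S = vdown p u S₁ := by
    rw [vdown_eq hp, vdown_eq hp]
    congr 1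
    congr 1
    rw [hS₁, Finset.sum_filter_of_ne]
    intro x hx hne
    by_contra hlt
    exact hne (by rw [hlow x (by omega)]; simp)
  rw [heq]
  set n := (S.sup id) + u + t + 3 with hn
  have htu : t < u := index_lt hp hdig
  have hSn : ∀ i ∈ S₁, i + 2 ≤ n := by
    intro i hi
    have : i ≤ S.sup id := Finset.le_sup (f := id) (Finset.mem_of_mem_filter i hi)
    omega
  have hH₁ : ∀ i ∈ S₁, i + 1 ∈ S₁ ∨ dig p u (i + 1) ≠ 0 := by
    intro i hi
    rw [hS₁, Finset.mem_filter] at hi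
    rcases hH i hi.1 hi.2 with h | h
    · exact Or.inl (by rw [hS₁, Finset.mem_filter]; exact ⟨h, by omega⟩)
    · exact Or.inr h
  have key := partial_ge hp u n S₁ hSn hH₁
  set f : ℕ → ℤ := fun i => (if i ∈ S₁ then (-1 : ℤ) else 1) * (dig p u i : ℤ) * (p : ℤ) ^ i with hf
  have hun : u < p ^ n := lt_of_lt_of_le (Nat.lt_pow_self (by omega) : u < p ^ u)
    (Nat.pow_le_pow_right (by omega) (by omega))
  have hv1 : vdown p u S₁ = ∑ i ∈ Finset.range n, f i := by
    unfold vdown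
    refine Finset.sum_subset ?_ ?_
    · intro i hi
      rcases Finset.mem_union.mp hi with h | h
      · exact Finset.mem_range.mpr (by have := Finset.mem_range.mp h; omega)
      · exact Finset.mem_range.mpr (by have := hSn i h; omega)
    · intro i hi hni
      have hiu : u ≤ i := by
        by_contra h
        exact hni (Finset.mem_union.mpr (Or.inl (Finset.mem_range.mpr (by omega))))
      have : dig p u i = 0 := by
        by_contra h
        have := index_lt hp h; omega
      simp [this]
  have hv2 : ∑ i ∈ Finset.range n, f i = ∑ i ∈ Finset.Ico t n, f i := by
    rw [Finset.range_eq_Ico, ← Finset.sum_Ico_consecutive _ (Nat.zero_le t) (by omega)]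
    have : ∑ i ∈ Finset.Ico 0 t, f i = 0 := by
      apply Finset.sum_eq_zero
      intro i hi
      have := hlow i (Finset.mem_Ico.mp hi).2
      simp [hf, this]
    rw [this, zero_add]
  rw [hv1, hv2]
  have hpt : (0 : ℤ) < (p : ℤ) ^ t := by positivity
  by_cases htS : t ∈ S₁
  · have := key t
    rw [if_pos htS] at this
    exact lt_of_lt_of_le hpt this
  · rw [Finset.sum_eq_sum_Ico_succ_bot (show t < n by omega)]
    have h2 := key (t + 1)
    have h2' : (0 : ℤ) ≤ ∑ i ∈ Finset.Ico (t + 1) n, f i := by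
      refine le_trans ?_ h2; split <;> positivity
    have hft : f t = (dig p u t : ℤ) * (p : ℤ) ^ t := by simp [hf, htS]
    have hd : (1 : ℤ) ≤ (dig p u t : ℤ) := by
      have : 1 ≤ dig p u t := Nat.one_le_iff_ne_zero.mpr hdig
      exact_mod_cast this
    have : (1 : ℤ) * (p : ℤ) ^ t ≤ (dig p u t : ℤ) * (p : ℤ) ^ t :=
      mul_le_mul_of_nonneg_right hd hpt.le
    rw [hft]
    linarith

lemma w_digits (hp : 2 ≤ p) (v s s' : ℕ) (hss : s < s')
    (has : dig p v s ≠ 0) (hmid : ∀ i, s < i → i < s' → dig p v i = 0)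
    (has' : dig p v s' ≠ 0) :
    2 * (dig p v s * p ^ s) ≤ v ∧
    (∀ t ≤ s, (v - 2 * (dig p v s * p ^ s)) / p ^ t = v / p ^ t - 2 * (dig p v s * p ^ (s - t))) ∧
    (∀ i < s, dig p (v - 2 * (dig p v s * p ^ s)) i = dig p v i) ∧
    dig p (v - 2 * (dig p v s * p ^ s)) s = p - dig p v s ∧
    (∀ t, s' < t → (v - 2 * (dig p v s * p ^ s)) / p ^ t = v / p ^ t) ∧
    (∀ i, s' < i → dig p (v - 2 * (dig p v s * p ^ s)) i = dig p v i) := by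
  have ha1 : 1 ≤ dig p v s := Nat.one_le_iff_ne_zero.mpr has
  have hap : dig p v s < p := dig_lt hp v s
  set a := dig p v s with ha
  clear_value a
  have hps' : p ^ s' ≤ v := by
    by_contra h
    exact has' (by unfold dig; rw [Nat.div_eq_of_lt (by omega)]; simp)
  have h2a : 2 * (a * p ^ s) = a * p ^ s + a * p ^ s := by ring
  have hcomm : p ^ s * a = a * p ^ s := mul_comm _ _
  have hpss : a * p ^ s + p ^ s ≤ p ^ s' := by
    have h1 : (a + 1) * p ^ s ≤ p * p ^ s := Nat.mul_le_mul_right _ (by omega)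
    have h2 : a * p ^ s + p ^ s = (a + 1) * p ^ s := by ring
    have h3 : p * p ^ s = p ^ (s + 1) := by rw [pow_succ]; ring
    have h4 : p ^ (s + 1) ≤ p ^ s' := Nat.pow_le_pow_right (by omega) (by omega)
    omega
  have hstep : ∀ t, dig p v t = 0 → v % p ^ (t + 1) = v % p ^ t := by
    intro t h
    rw [Nat.mod_pow_succ]
    unfold dig at h
    rw [h]
    simp
  have hmods : ∀ t, s < t → t ≤ s' → v % p ^ t = v % p ^ s + p ^ s * a := by
    intro t
    induction t with
    | zero => omega
    | succ t ih =>
      intro h1 h2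
      rcases Nat.lt_or_ge s t with h | h
      · rw [hstep t (hmid t h (by omega)), ih h (by omega)]
      · have hts : t = s := by omega
        subst hts
        rw [Nat.mod_pow_succ, ha]
        rfl
  have hms : v % p ^ s < p ^ s := Nat.mod_lt _ (by positivity)
  have haps : p ^ s ≤ a * p ^ s := Nat.le_mul_of_pos_left _ (by omega)
  have hle : 2 * (a * p ^ s) ≤ v := by
    clear ha
    have h1 := hmods s' hss (le_refl s')
    have h2 := Nat.div_add_mod v (p ^ s')
    have h3 : 1 ≤ v / p ^ s' := by
      rw [Nat.le_div_iff_mul_le (by positivity : 0 < p ^ s')]; omega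
    have h4 : p ^ s' ≤ p ^ s' * (v / p ^ s') := Nat.le_mul_of_pos_right _ (by omega)
    clear hstep hmods
    set q := v / p ^ s' with hq
    clear_value q
    clear hq
    set M := v % p ^ s' with hM
    clear_value M
    clear hM
    set m := v % p ^ s with hm
    clear_value m
    clear hm h3
    omega
  have hdiv : ∀ t ≤ s, (v - 2 * (a * p ^ s)) / p ^ t = v / p ^ t - 2 * (a * p ^ (s - t)) := by
    intro t ht
    have hpow : p ^ t * (2 * (a * p ^ (s - t))) = 2 * (a * p ^ s) := by
      have h : p ^ t * p ^ (s - t) = p ^ s := by rw [← pow_add]; congr 1; omega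
      rw [← h]; ring
    rw [show v - 2 * (a * p ^ s) = v - p ^ t * (2 * (a * p ^ (s - t))) by rw [hpow]]
    exact Nat.sub_mul_div v (p ^ t) _
  have hdigbelow : ∀ i < s, dig p (v - 2 * (a * p ^ s)) i = dig p v i := by
    intro i hi
    unfold dig
    rw [hdiv i (by omega)]
    have h1 : 2 * (a * p ^ (s - i)) = p * (2 * (a * p ^ (s - i - 1))) := by
      have h : p * p ^ (s - i - 1) = p ^ (s - i) := by
        rw [← pow_succ']; congr 1; omega
      rw [← h]; ring
    rw [h1]
    apply Nat.sub_mul_mod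
    rw [← h1, Nat.le_div_iff_mul_le (by positivity : 0 < p ^ i)]
    have h2 : 2 * (a * p ^ (s - i)) * p ^ i = 2 * (a * p ^ s) := by
      have h : p ^ (s - i) * p ^ i = p ^ s := by rw [← pow_add]; congr 1; omega
      rw [← h]; ring
    rw [h2]
    exact hle
  have hdigs : dig p (v - 2 * (a * p ^ s)) s = p - a := by
    unfold dig
    rw [hdiv s (le_refl s)]
    have hq : v / p ^ s = p * (v / p ^ (s + 1)) + a := by
      have h1 : v / p ^ (s + 1) = v / p ^ s / p := by
        rw [Nat.div_div_eq_div_mul, ← pow_succ]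
      rw [h1]
      have h2 := Nat.div_add_mod (v / p ^ s) p
      unfold dig at ha
      omega
    have hq1 : 1 ≤ v / p ^ (s + 1) := by
      rw [Nat.le_div_iff_mul_le (by positivity : 0 < p ^ (s + 1))]
      have h : p ^ (s + 1) ≤ p ^ s' := Nat.pow_le_pow_right (by omega) (by omega)
      omega
    obtain ⟨k, hk⟩ : ∃ k, v / p ^ (s + 1) = k + 1 := ⟨v / p ^ (s + 1) - 1, by omega⟩
    rw [hk] at hq
    have hmulk : p * (k + 1) = p * k + p := by ring
    rw [show p ^ (s - s) = 1 by simp]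
    rw [show v / p ^ s - 2 * (a * 1) = p * k + (p - a) by
      clear ha hms hq1 hk
      clear hstep hmods
      set D := v / p ^ s with hD
      clear_value D
      clear hD
      omega]
    rw [Nat.mul_add_mod]
    exact Nat.mod_eq_of_lt (by omega)
  have hdivQ : (v - 2 * (a * p ^ s)) / p ^ (s' + 1) = v / p ^ (s' + 1) := by
    have hq1 : 1 ≤ v / p ^ s' := by
      rw [Nat.le_div_iff_mul_le (by positivity : 0 < p ^ s')]; omega
    have hqm := Nat.div_add_mod v (p ^ s')
    have hmm := hmods s' hss (le_refl s')
    obtain ⟨k, hk⟩ : ∃ k, v / p ^ s' = k + 1 := ⟨v / p ^ s' - 1, by omega⟩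
    have hmulk : p ^ s' * (k + 1) = p ^ s' * k + p ^ s' := by ring
    rw [hk] at hqm
    have hw1 : (v - 2 * (a * p ^ s)) / p ^ s' = k := by
      have hr : v - 2 * (a * p ^ s) = p ^ s' * k + (p ^ s' - a * p ^ s + v % p ^ s) := by
        clear ha hq1 hk hstep hmods
        set m := v % p ^ s with hm
        clear_value m
        clear hm
        set M := v % p ^ s' with hM
        clear_value M
        clear hM
        omega
      have hrlt : p ^ s' - a * p ^ s + v % p ^ s < p ^ s' := by
        clear ha hq1 hk hqm hmm hstep hmods
        set m := v % p ^ s with hm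
        clear_value m
        clear hm
        omega
      rw [hr, Nat.mul_add_div (by positivity : 0 < p ^ s'),
        Nat.div_eq_of_lt hrlt, add_zero]
    have h6 : (v - 2 * (a * p ^ s)) / p ^ (s' + 1) = k / p := by
      rw [← hw1, Nat.div_div_eq_div_mul, ← pow_succ]
    have h7 : v / p ^ (s' + 1) = (k + 1) / p := by
      rw [← hk, Nat.div_div_eq_div_mul, ← pow_succ]
    rw [h6, h7]
    have hds' : (k + 1) % p = dig p v s' := by
      unfold dig
      rw [← hk]
    have h4 : 1 ≤ (k + 1) % p := by
      rw [hds']; exact Nat.one_le_iff_ne_zero.mpr has'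
    have hmodlt := Nat.mod_lt (k + 1) (show 0 < p by omega)
    obtain ⟨c, r, hr1, hrp, hk2⟩ : ∃ c r, 1 ≤ r ∧ r < p ∧ k + 1 = p * c + r :=
      ⟨(k + 1) / p, (k + 1) % p, h4, hmodlt, (Nat.div_add_mod _ _).symm⟩
    have hkp : k / p = c := by
      rw [show k = p * c + (r - 1) by omega, Nat.mul_add_div (by omega : 0 < p),
        Nat.div_eq_of_lt (by omega), add_zero]
    have hk1p : (k + 1) / p = c := by
      rw [hk2, Nat.mul_add_div (by omega : 0 < p),
        Nat.div_eq_of_lt (by omega), add_zero]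
    rw [hkp, hk1p]
  have hdivabove : ∀ t, s' < t → (v - 2 * (a * p ^ s)) / p ^ t = v / p ^ t := by
    intro t ht
    have h1 : p ^ t = p ^ (s' + 1) * p ^ (t - s' - 1) := by
      rw [← pow_add]; congr 1; omega
    rw [h1, ← Nat.div_div_eq_div_mul, ← Nat.div_div_eq_div_mul, hdivQ]
  exact ⟨hle, hdiv, hdigbelow, hdigs, hdivabove, fun i hi => by
    unfold dig; rw [hdivabove i hi]⟩

lemma fancest'_succ (hp : 2 ≤ p) {v t : ℕ} (hd : dig p v t = 0) :
    fancest' p v t = fancest' p v (t + 1) := by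
  unfold fancest'
  have h1 : v / p ^ (t + 1) = v / p ^ t / p := by
    rw [Nat.div_div_eq_div_mul, ← pow_succ]
  have h2 := Nat.div_add_mod (v / p ^ t) p
  unfold dig at hd
  rw [h1, pow_succ, mul_assoc]
  congr 1
  omega

end Helpers

/-- Let `S` be down-admissible for `v` and `S' = {s, …, s'-1}` a minimal
down-admissible stretch for `v` with `s ∈ S` and `s' ∉ S`. Then `S' ⊆ S`, the set
`S \ S'` is down-admissible for `v[S']`, and
`λ_{v,S} · (-1)^(a_s p^s) · fancest_s(v)[S]± / fancest_{s-1}(v)[S]± = λ_{v[S'], S \ S'}`. -/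
theorem stmt17 (p v : ℕ) (hp : p.Prime) (hv : 1 ≤ v) (S : Finset ℕ) (s s' : ℕ)
    (hss : s < s') (hS : DownAdm p v S)
    (hmin : MinDownStretch p v (Finset.Ico s s'))
    (hsS : s ∈ S) (hs'S : s' ∉ S) :
    Finset.Ico s s' ⊆ S ∧
    DownAdm p (vdownN p v (Finset.Ico s s')) (S \ Finset.Ico s s') ∧
    lam p v S * ((-1 : ℚ) ^ (dig p v s * p ^ s) *
        ((vdown p (fancest' p v (s + 1)) S : ℚ) / (vdown p (fancest' p v s) S : ℚ))) =
      lam p (vdownN p v (Finset.Ico s s')) (S \ Finset.Ico s s') := by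
  classical
  have hp2 : 2 ≤ p := hp.two_le
  -- digit structure of v on [s, s']
  have hsmem : s ∈ Finset.Ico s s' := Finset.mem_Ico.mpr ⟨le_refl s, hss⟩
  have has : dig p v s ≠ 0 := by
    refine hmin.1.1 s hsmem ?_
    rcases Nat.eq_zero_or_pos s with h | h
    · exact Or.inl h
    · exact Or.inr (fun hm => by have := (Finset.mem_Ico.mp hm).1; omega)
  have hmid : ∀ i, s < i → i < s' → dig p v i = 0 := by
    intro t hts hts'
    by_contra hne
    refine hmin.2.2 (Finset.Ico s t) ?_ ⟨s, Finset.mem_Ico.mpr ⟨le_refl s, hts⟩⟩ ?_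
    · refine Finset.ssubset_iff_of_subset (Finset.Ico_subset_Ico (le_refl s) (by omega)) |>.mpr ?_
      exact ⟨t, Finset.mem_Ico.mpr ⟨by omega, by omega⟩, fun hc => by
        have := (Finset.mem_Ico.mp hc).2; omega⟩
    · constructor
      · intro x hx hcond
        have hxm := Finset.mem_Ico.mp hx
        have hxs : x = s := by
          rcases hcond with h0 | h1
          · omega
          · by_contra hxs
            exact h1 (Finset.mem_Ico.mpr ⟨by omega, by omega⟩)
        rw [hxs]; exact has
      · intro x hx hd
        have hxm := Finset.mem_Ico.mp hx
        refine Finset.mem_Ico.mpr ⟨by omega, ?_⟩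
        rcases Nat.lt_or_ge (x + 1) t with h | h
        · exact h
        · exfalso
          have hxt : x + 1 = t := by omega
          rw [hxt] at hd
          exact hne hd
  have has' : dig p v s' ≠ 0 := by
    intro h0
    have hmm := hmin.1.2 (s' - 1) (Finset.mem_Ico.mpr ⟨by omega, by omega⟩) (by
      rw [show s' - 1 + 1 = s' by omega]; exact h0)
    rw [show s' - 1 + 1 = s' by omega] at hmm
    have := (Finset.mem_Ico.mp hmm).2
    omega
  -- S' ⊆ S
  have hind : ∀ d, s + d < s' → s + d ∈ S := by
    intro d
    induction d with
    | zero => intro _; simpa using hsS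
    | succ d ih =>
      intro hd
      have h1 : s + d ∈ S := ih (by omega)
      have h2 : dig p v (s + d + 1) = 0 := hmid (s + d + 1) (by omega) (by omega)
      have h3 := hS.2 (s + d) h1 h2
      rw [show s + d + 1 = s + (d + 1) by omega] at h3
      exact h3
  have hsub : Finset.Ico s s' ⊆ S := by
    intro t ht
    rcases Finset.mem_Ico.mp ht with ⟨h1, h2⟩
    have := hind (t - s) (by omega)
    rwa [show s + (t - s) = t by omega] at this
  -- the w facts
  obtain ⟨hW0, hWdiv, hWdb, hWds, hWdivab, hWdab⟩ := w_digits hp2 v s s' hss has hmid has'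
  have hWd : ∀ i, i < s ∨ s' < i → dig p (v - 2 * (dig p v s * p ^ s)) i = dig p v i := by
    intro i hi
    rcases hi with h | h
    · exact hWdb i h
    · exact hWdab i h
  have hsum' : ∑ i ∈ Finset.Ico s s', (dig p v i : ℤ) * (p : ℤ) ^ i
      = (dig p v s : ℤ) * (p : ℤ) ^ s := by
    rw [Finset.sum_eq_sum_Ico_succ_bot hss]
    have hz : ∑ i ∈ Finset.Ico (s + 1) s', (dig p v i : ℤ) * (p : ℤ) ^ i = 0 := by
      apply Finset.sum_eq_zero
      intro i hi
      rcases Finset.mem_Ico.mp hi with ⟨h1, h2⟩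
      rw [hmid i (by omega) h2]
      simp
    rw [hz, add_zero]
  have hvdown' : vdown p v (Finset.Ico s s') = ((v - 2 * (dig p v s * p ^ s) : ℕ) : ℤ) := by
    rw [vdown_eq hp2, hsum', Nat.cast_sub hW0]
    push_cast
    ring
  have hwN : vdownN p v (Finset.Ico s s') = v - 2 * (dig p v s * p ^ s) := by
    rw [vdownN, hvdown']
    simp
  -- membership characterization of T
  have hTc : ∀ i ∈ S \ Finset.Ico s s', i ∈ S ∧ (i < s ∨ s' < i) := by
    intro i hi
    rw [Finset.mem_sdiff, Finset.mem_Ico] at hi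
    refine ⟨hi.1, ?_⟩
    rcases Nat.lt_or_ge i s with h | h
    · exact Or.inl h
    · right
      have h2 : s' ≤ i := by omega
      rcases Nat.lt_or_ge s' i with h3 | h3
      · exact h3
      · exfalso
        have hieq : i = s' := by omega
        rw [hieq] at hi
        exact hs'S hi.1
  refine ⟨hsub, ?_, ?_⟩
  · -- DownAdm
    rw [hwN]
    constructor
    · intro i hiT hcond
      obtain ⟨hiS, hior⟩ := hTc i hiT
      rw [hWd i hior]
      rcases hcond with h0 | hnot
      · exact hS.1 i hiS (Or.inl h0)
      · refine hS.1 i hiS (Or.inr (fun hmem => hnot ?_))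
        rw [Finset.mem_sdiff, Finset.mem_Ico]
        exact ⟨hmem, by omega⟩
    · intro i hiT hdig0
      obtain ⟨hiS, hior⟩ := hTc i hiT
      rcases hior with h | h
      · rcases Nat.lt_or_ge (i + 1) s with h1 | h1
        · rw [hWd (i + 1) (Or.inl h1)] at hdig0
          have := hS.2 i hiS hdig0
          rw [Finset.mem_sdiff, Finset.mem_Ico]
          exact ⟨this, by omega⟩
        · exfalso
          have hi1 : i + 1 = s := by omega
          rw [hi1, hWds] at hdig0
          have h2 := dig_lt hp2 v s
          have h3 := Nat.one_le_iff_ne_zero.mpr has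
          omega
      · rw [hWd (i + 1) (Or.inr (by omega))] at hdig0
        have := hS.2 i hiS hdig0
        rw [Finset.mem_sdiff, Finset.mem_Ico]
        exact ⟨this, by omega⟩
  · -- the lambda identity
    have hchain : ∀ d t, s + 1 ≤ t → t + d = s' → fancest' p v t = fancest' p v s' := by
      intro d
      induction d with
      | zero => intro t h1 h2; rw [show t = s' by omega]
      | succ d ih =>
        intro t h1 h2
        rw [fancest'_succ hp2 (hmid t (by omega) (by omega))]
        exact ih (t + 1) (by omega) (by omega)
    have hch : ∀ t, s + 1 ≤ t → t ≤ s' → fancest' p v t = fancest' p v s' :=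
      fun t h1 h2 => hchain (s' - t) t h1 (by omega)
    have hfs'pos : 0 < vdown p (fancest' p v s') S := by
      apply vdown_pos hp2 _ S s'
      · intro i hi; rw [dig_fancest' hp2 v s' i, if_pos hi]
      · rw [dig_fancest' hp2 v s' s', if_neg (lt_irrefl s')]; exact has'
      · intro i hiS hge
        by_cases hz : dig p v (i + 1) = 0
        · exact Or.inl (hS.2 i hiS hz)
        · right
          rw [dig_fancest' hp2 v s' (i + 1), if_neg (by omega)]
          exact hz
    have hfspos : 0 < vdown p (fancest' p v s) S := by
      apply vdown_pos hp2 _ S s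
      · intro i hi; rw [dig_fancest' hp2 v s i, if_pos hi]
      · rw [dig_fancest' hp2 v s s, if_neg (lt_irrefl s)]; exact has
      · intro i hiS hge
        by_cases hz : dig p v (i + 1) = 0
        · exact Or.inl (hS.2 i hiS hz)
        · right
          rw [dig_fancest' hp2 v s (i + 1), if_neg (by omega)]
          exact hz
    have hQs' : ((vdown p (fancest' p v s') S : ℤ) : ℚ) ≠ 0 := by
      exact_mod_cast ne_of_gt hfs'pos
    have hQs : ((vdown p (fancest' p v s) S : ℤ) : ℚ) ≠ 0 := by
      exact_mod_cast ne_of_gt hfspos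
    have hQs1 : ((vdown p (fancest' p v (s + 1)) S : ℤ) : ℚ) ≠ 0 := by
      rw [hch (s + 1) (le_refl (s + 1)) (by omega)]
      exact hQs'
    have hfilt : ∀ (x : ℕ) (t : ℕ) (U : Finset ℕ),
        ∑ i ∈ U, (dig p (fancest' p x t) i : ℤ) * (p : ℤ) ^ i
          = ∑ i ∈ U.filter (fun i => t ≤ i), (dig p x i : ℤ) * (p : ℤ) ^ i := by
      intro x t U
      rw [Finset.sum_filter]
      refine Finset.sum_congr rfl (fun i _ => ?_)
      rw [dig_fancest' hp2 x t i]
      by_cases h : t ≤ i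
      · rw [if_neg (by omega), if_pos h]
      · rw [if_pos (by omega), if_neg h]
        simp
    have hcore : ∀ t, t ≤ s ∨ s' < t →
        vdown p (fancest' p (v - 2 * (dig p v s * p ^ s)) t) (S \ Finset.Ico s s')
          = vdown p (fancest' p v t) S := by
      intro t ht
      rw [vdown_eq hp2, vdown_eq hp2,
        hfilt (v - 2 * (dig p v s * p ^ s)) t (S \ Finset.Ico s s'), hfilt v t S]
      have hdigTS : ∑ i ∈ (S \ Finset.Ico s s').filter (fun i => t ≤ i),
          (dig p (v - 2 * (dig p v s * p ^ s)) i : ℤ) * (p : ℤ) ^ i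
          = ∑ i ∈ (S \ Finset.Ico s s').filter (fun i => t ≤ i),
            (dig p v i : ℤ) * (p : ℤ) ^ i := by
        refine Finset.sum_congr rfl (fun i hi => ?_)
        rw [Finset.mem_filter] at hi
        rw [hWd i (hTc i hi.1).2]
      rw [hdigTS]
      rcases ht with hts | hts
      · have hble : 2 * (dig p v s * p ^ (s - t)) ≤ v / p ^ t := by
          rw [Nat.le_div_iff_mul_le (by positivity : 0 < p ^ t)]
          have hx : 2 * (dig p v s * p ^ (s - t)) * p ^ t = 2 * (dig p v s * p ^ s) := by
            have h : p ^ (s - t) * p ^ t = p ^ s := by rw [← pow_add]; congr 1; omega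
            rw [← h]; ring
          rw [hx]; exact hW0
        have hpz : ((p : ℤ)) ^ t * ((p : ℤ)) ^ (s - t) = ((p : ℤ)) ^ s := by
          rw [← pow_add]; congr 1; omega
        have hfw : ((fancest' p (v - 2 * (dig p v s * p ^ s)) t : ℕ) : ℤ)
            = ((fancest' p v t : ℕ) : ℤ) - 2 * ((dig p v s : ℤ) * ((p : ℤ)) ^ s) := by
          unfold fancest'
          rw [hWdiv t hts, Nat.cast_mul, Nat.cast_sub hble]
          push_cast
          rw [← hpz]
          ring
        have hsplit : S.filter (fun i => t ≤ i)
            = ((S \ Finset.Ico s s').filter (fun i => t ≤ i)) ∪ Finset.Ico s s' := by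
          ext i
          simp only [Finset.mem_filter, Finset.mem_union, Finset.mem_sdiff, Finset.mem_Ico]
          constructor
          · rintro ⟨h1, h2⟩
            by_cases h3 : s ≤ i ∧ i < s'
            · exact Or.inr h3
            · exact Or.inl ⟨⟨h1, h3⟩, h2⟩
          · rintro (⟨⟨h1, h2⟩, h3⟩ | h3)
            · exact ⟨h1, h3⟩
            · exact ⟨hsub (Finset.mem_Ico.mpr h3), by omega⟩
        have hdisj : Disjoint ((S \ Finset.Ico s s').filter (fun i => t ≤ i))
            (Finset.Ico s s') := by
          rw [Finset.disjoint_left]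
          intro i hi hi2
          rw [Finset.mem_filter, Finset.mem_sdiff] at hi
          exact hi.1.2 hi2
        rw [hsplit, Finset.sum_union hdisj, hsum', hfw]
        ring
      · have hfw2 : fancest' p (v - 2 * (dig p v s * p ^ s)) t = fancest' p v t := by
          unfold fancest'
          rw [hWdivab t hts]
        have hfilteq : (S \ Finset.Ico s s').filter (fun i => t ≤ i)
            = S.filter (fun i => t ≤ i) := by
          ext i
          simp only [Finset.mem_filter, Finset.mem_sdiff, Finset.mem_Ico]
          constructor
          · rintro ⟨⟨h1, h2⟩, h3⟩
            exact ⟨h1, h3⟩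
          · rintro ⟨h1, h3⟩
            exact ⟨⟨h1, by omega⟩, h3⟩
        rw [hfw2, hfilteq]
    have hGF : ∀ t ∈ S \ Finset.Ico s s',
        (-1 : ℚ) ^ (dig p (v - 2 * (dig p v s * p ^ s)) t * p ^ t) *
          ((vdown p (fancest' p (v - 2 * (dig p v s * p ^ s)) t) (S \ Finset.Ico s s') : ℚ) /
            (vdown p (fancest' p (v - 2 * (dig p v s * p ^ s)) (t + 1)) (S \ Finset.Ico s s') : ℚ))
        = (-1 : ℚ) ^ (dig p v t * p ^ t) *
          ((vdown p (fancest' p v t) S : ℚ) / (vdown p (fancest' p v (t + 1)) S : ℚ)) := by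
      intro t htm
      obtain ⟨htS, hor⟩ := hTc t htm
      have hor1 : t ≤ s ∨ s' < t := by rcases hor with h | h; exacts [Or.inl (by omega), Or.inr h]
      have hor2 : t + 1 ≤ s ∨ s' < t + 1 := by
        rcases hor with h | h; exacts [Or.inl (by omega), Or.inr (by omega)]
      rw [hWd t hor, hcore t hor1, hcore (t + 1) hor2]
    rw [hwN]
    unfold lam
    rw [Finset.prod_congr rfl hGF]
    rw [← Finset.prod_sdiff hsub, Finset.prod_eq_prod_Ico_succ_bot hss]
    have hone : ∏ t ∈ Finset.Ico (s + 1) s', ((-1 : ℚ) ^ (dig p v t * p ^ t) *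
        ((vdown p (fancest' p v t) S : ℚ) / (vdown p (fancest' p v (t + 1)) S : ℚ))) = 1 := by
      apply Finset.prod_eq_one
      intro t htm
      rcases Finset.mem_Ico.mp htm with ⟨h1, h2⟩
      have hd0 : dig p v t = 0 := hmid t (by omega) h2
      have he1 : fancest' p v t = fancest' p v s' := hch t h1 (by omega)
      have he2 : fancest' p v (t + 1) = fancest' p v s' := hch (t + 1) (by omega) (by omega)
      rw [hd0, he1, he2, zero_mul, pow_zero, one_mul, div_self hQs']
    rw [hone, mul_one, mul_assoc]
    have hcc : ((-1 : ℚ) ^ (dig p v s * p ^ s) *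
        ((vdown p (fancest' p v s) S : ℚ) / (vdown p (fancest' p v (s + 1)) S : ℚ))) *
        ((-1 : ℚ) ^ (dig p v s * p ^ s) *
        ((vdown p (fancest' p v (s + 1)) S : ℚ) / (vdown p (fancest' p v s) S : ℚ))) = 1 := by
      rw [mul_mul_mul_comm, ← pow_add, ← two_mul, pow_mul, neg_one_sq, one_pow, one_mul,
        div_mul_div_comm,
        mul_comm ((vdown p (fancest' p v (s + 1)) S : ℤ) : ℚ) ((vdown p (fancest' p v s) S : ℤ) : ℚ)]
      exact div_self (mul_ne_zero hQs hQs1)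
    rw [hcc, mul_one]



end SL2Tilt
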